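/- For any type class T(P_X) of sequences of length n over a finite alphabet X with type P_X, the cardinality satisfies (n+1)^{-|X|} · 2^{n H(P_X)} ≤ |T(P_X)| ≤ 2^{n H(P_X)}, where H is the Shannon entropy in bits. -/

import Mathlib

open Finset Nat

/-- Number of occurrences of the symbol `a` in the sequence `x`. -/
def cnt {𝒳 : Type*} [DecidableEq 𝒳] {n : ℕ} (a : 𝒳) (x : Fin n → 𝒳) : ℕ :=
  (Finset.univ.filter (fun i => x i = a)).card

namespace TypeClassAux

variable {𝒳 : Type*} [Fintype 𝒳] [DecidableEq 𝒳] {n : ℕ}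

lemma sum_cnt (x : Fin n → 𝒳) : ∑ a, cnt a x = n := by
  have h := Finset.card_eq_sum_card_fiberwise
    (f := x) (s := (univ : Finset (Fin n))) (t := univ) (fun i _ => mem_univ (x i))
  simpa [cnt, Finset.card_univ] using h.symm

lemma cnt_le (a : 𝒳) (x : Fin n → 𝒳) : cnt a x ≤ n := by
  simpa [cnt] using (Finset.card_filter_le (univ : Finset (Fin n)) (fun i => x i = a)).trans_eq
    (by simp)

lemma prod_comp_cnt {M : Type*} [CommMonoid M] (x : Fin n → 𝒳) (g : 𝒳 → M) :
    ∏ i, g (x i) = ∏ a, g a ^ cnt a x := by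
  rw [← Finset.prod_fiberwise univ x (fun i => g (x i))]
  refine Finset.prod_congr rfl fun a _ => ?_
  rw [Finset.prod_congr rfl (fun i hi => ?_), Finset.prod_const, cnt]
  exact congrArg g (Finset.mem_filter.1 hi).2

lemma factorial_aux (j d : ℕ) : (j + d)! ≤ j ! * (j + d) ^ d := by
  induction d with
  | zero => simp
  | succ d ih =>
    calc (j + (d + 1))! = (j + d + 1) * (j + d)! := by
          rw [← Nat.add_assoc, Nat.factorial_succ]
      _ ≤ (j + d + 1) * (j ! * (j + d) ^ d) := Nat.mul_le_mul_left _ ih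
      _ ≤ (j + d + 1) * (j ! * (j + d + 1) ^ d) := by
          exact Nat.mul_le_mul_left _ (Nat.mul_le_mul_left _
            (Nat.pow_le_pow_left (Nat.le_succ _) _))
      _ = j ! * (j + (d + 1)) ^ (d + 1) := by ring_nf
  
lemma fact_pow (k j : ℕ) : k ! * k ^ j ≤ j ! * k ^ k := by
  rcases le_or_gt j k with h | h
  · have h1 : k ! ≤ j ! * k ^ (k - j) := by
      have := factorial_aux j (k - j)
      rwa [Nat.add_sub_cancel' h] at this
    calc k ! * k ^ j ≤ j ! * k ^ (k - j) * k ^ j := Nat.mul_le_mul_right _ h1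
      _ = j ! * k ^ (k - j + j) := by rw [pow_add, Nat.mul_assoc]
      _ = j ! * k ^ k := by rw [Nat.sub_add_cancel h]
  · calc k ! * k ^ j = k ! * k ^ (j - k) * k ^ k := by
          rw [Nat.mul_assoc, ← pow_add, Nat.sub_add_cancel h.le]
      _ ≤ k ! * (k + 1) ^ (j - k) * k ^ k :=
          Nat.mul_le_mul_right _ (Nat.mul_le_mul_left _ (Nat.pow_le_pow_left (Nat.le_succ k) _))
      _ ≤ (k + (j - k))! * k ^ k := Nat.mul_le_mul_right _ Nat.factorial_mul_pow_le_factorial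
      _ = j ! * k ^ k := by rw [Nat.add_sub_cancel' h.le]

lemma exists_perm {x x1 : Fin n → 𝒳} (h : ∀ a, cnt a x = cnt a x1) :
    ∃ σ : Equiv.Perm (Fin n), x1 ∘ σ = x := by
  have hc : ∀ a, Fintype.card {i // x i = a} = Fintype.card {i // x1 i = a} := by
    intro a
    rw [Fintype.card_subtype, Fintype.card_subtype]
    exact h a
  let e : ∀ a, {i // x i = a} ≃ {i // x1 i = a} := fun a => Fintype.equivOfCardEq (hc a)
  refine ⟨(Equiv.sigmaFiberEquiv x).symm.trans
    ((Equiv.sigmaCongrRight e).trans (Equiv.sigmaFiberEquiv x1)), ?_⟩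
  funext i
  exact (e (x i) ⟨i, rfl⟩).2

lemma cnt_comp_perm (x1 : Fin n → 𝒳) (σ : Equiv.Perm (Fin n)) (a : 𝒳) :
    cnt a (x1 ∘ σ) = cnt a x1 := by
  unfold cnt
  refine Finset.card_bij (fun i _ => σ i) ?_ ?_ ?_
  · intro i hi
    simp only [Function.comp_apply, Finset.mem_filter, Finset.mem_univ, true_and] at hi ⊢
    exact hi
  · intro i _ j _ hij
    exact σ.injective hij
  · intro b hb
    refine ⟨σ.symm b, ?_, by simp⟩
    simp only [Function.comp_apply, Finset.mem_filter, Finset.mem_univ, true_and] at hb ⊢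
    simpa using hb

lemma card_typeclass (x1 : Fin n → 𝒳) :
    (univ.filter (fun x : Fin n → 𝒳 => ∀ a, cnt a x = cnt a x1)).card * ∏ a, (cnt a x1)! = n ! := by
  classical
  have hmap : ∀ σ : Equiv.Perm (Fin n),
      x1 ∘ σ ∈ univ.filter (fun x : Fin n → 𝒳 => ∀ a, cnt a x = cnt a x1) := by
    intro σ
    simp [cnt_comp_perm]
  have hcard := Finset.card_eq_sum_card_fiberwise
    (f := fun σ : Equiv.Perm (Fin n) => x1 ∘ σ) (s := univ)
    (t := univ.filter (fun x : Fin n → 𝒳 => ∀ a, cnt a x = cnt a x1)) (fun σ _ => hmap σ)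
  have h1 : (univ : Finset (Equiv.Perm (Fin n))).card = n ! := by
    simp [Finset.card_univ, Fintype.card_perm, Fintype.card_fin]
  have h2 : ∀ x ∈ univ.filter (fun x : Fin n → 𝒳 => ∀ a, cnt a x = cnt a x1),
      (univ.filter (fun σ : Equiv.Perm (Fin n) => x1 ∘ σ = x)).card = ∏ a, (cnt a x1)! := by
    intro x hx
    obtain ⟨σ0, hσ0⟩ := exists_perm (fun a => (Finset.mem_filter.1 hx).2 a)
    have hbij : (univ.filter (fun σ : Equiv.Perm (Fin n) => x1 ∘ σ = x)).card
        = (univ.filter (fun σ : Equiv.Perm (Fin n) => x1 ∘ σ = x1)).card := by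
      refine Finset.card_bij (fun σ _ => σ0.symm.trans σ) ?_ ?_ ?_
      · intro σ hσ
        simp only [Finset.mem_filter, Finset.mem_univ, true_and] at hσ ⊢
        funext i
        have h1 : x1 (σ (σ0.symm i)) = x (σ0.symm i) := congrFun hσ (σ0.symm i)
        have h2 : x (σ0.symm i) = x1 i := by
          rw [← hσ0]; simp
        simpa using h1.trans h2
      · intro σ _ τ _ hστ
        apply Equiv.ext; intro i
        have := congrArg (fun ρ : Equiv.Perm (Fin n) => ρ (σ0 i)) hστ
        simpa using this
      · intro τ hτ
        simp only [Finset.mem_filter, Finset.mem_univ, true_and] at hτ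
        refine ⟨σ0.trans τ, ?_, by ext i; simp⟩
        simp only [Finset.mem_filter, Finset.mem_univ, true_and]
        funext i
        have h1 : x1 (τ (σ0 i)) = x1 (σ0 i) := congrFun hτ (σ0 i)
        have h2 : x1 (σ0 i) = x i := congrFun hσ0 i
        simpa using h1.trans h2
    rw [hbij]
    have hst : (univ.filter (fun σ : Equiv.Perm (Fin n) => x1 ∘ σ = x1)).card
        = Fintype.card {σ : Equiv.Perm (Fin n) // x1 ∘ σ = x1} := (Fintype.card_subtype _).symm
    rw [hst]
    rw [DomMulAct.stabilizer_card x1]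
    exact Finset.prod_congr rfl fun a _ => by rw [Fintype.card_subtype]; rfl
  rw [h1, Finset.sum_congr rfl h2, Finset.sum_const, smul_eq_mul] at hcard
  exact hcard.symm

lemma key_nat (x0 x1 : Fin n → 𝒳) :
    (univ.filter (fun x : Fin n → 𝒳 => ∀ a, cnt a x = cnt a x1)).card
        * ∏ a, (cnt a x0) ^ (cnt a x1)
      ≤ (univ.filter (fun x : Fin n → 𝒳 => ∀ a, cnt a x = cnt a x0)).card
        * ∏ a, (cnt a x0) ^ (cnt a x0) := by
  classical
  set N1 := (univ.filter (fun x : Fin n → 𝒳 => ∀ a, cnt a x = cnt a x1)).card with hN1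
  set N0 := (univ.filter (fun x : Fin n → 𝒳 => ∀ a, cnt a x = cnt a x0)).card with hN0
  have h1 := card_typeclass x1
  have h0 := card_typeclass x0
  have hpt : ∏ a, ((cnt a x0)! * (cnt a x0) ^ (cnt a x1))
      ≤ ∏ a, ((cnt a x1)! * (cnt a x0) ^ (cnt a x0)) :=
    Finset.prod_le_prod' fun a _ => fact_pow (cnt a x0) (cnt a x1)
  have hpos : 0 < (∏ a, (cnt a x1)!) * ∏ a, (cnt a x0)! := by positivity
  refine Nat.le_of_mul_le_mul_left ?_ hpos
  calc (∏ a, (cnt a x1)!) * (∏ a, (cnt a x0)!) * (N1 * ∏ a, (cnt a x0) ^ (cnt a x1))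
      = (N1 * ∏ a, (cnt a x1)!) * ∏ a, ((cnt a x0)! * (cnt a x0) ^ (cnt a x1)) := by
        rw [Finset.prod_mul_distrib]; ring
    _ = n ! * ∏ a, ((cnt a x0)! * (cnt a x0) ^ (cnt a x1)) := by rw [h1]
    _ ≤ n ! * ∏ a, ((cnt a x1)! * (cnt a x0) ^ (cnt a x0)) := Nat.mul_le_mul_left _ hpt
    _ = (N0 * ∏ a, (cnt a x0)!) * ∏ a, ((cnt a x1)! * (cnt a x0) ^ (cnt a x0)) := by rw [h0]
    _ = (∏ a, (cnt a x1)!) * (∏ a, (cnt a x0)!) * (N0 * ∏ a, (cnt a x0) ^ (cnt a x0)) := by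
        rw [Finset.prod_mul_distrib]; ring

end TypeClassAux

open TypeClassAux

/-- size of a type class:
(n+1)^{-|𝒳|} 2^{n H(P_X)} ≤ |T(P_X)| ≤ 2^{n H(P_X)}. -/
theorem type_class_size {𝒳 : Type*} [Fintype 𝒳] [DecidableEq 𝒳] (n : ℕ)
    (x0 : Fin n → 𝒳) :
    (((n : ℝ) + 1) ^ (Fintype.card 𝒳))⁻¹ *
        (2 : ℝ) ^ ((n : ℝ) * (-∑ a, ((cnt a x0 : ℝ) / n) * Real.logb 2 ((cnt a x0 : ℝ) / n)))
      ≤ ((Finset.univ.filter (fun x : Fin n → 𝒳 => ∀ a, cnt a x = cnt a x0)).card : ℝ)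
    ∧ ((Finset.univ.filter (fun x : Fin n → 𝒳 => ∀ a, cnt a x = cnt a x0)).card : ℝ)
      ≤ (2 : ℝ) ^ ((n : ℝ) * (-∑ a, ((cnt a x0 : ℝ) / n) * Real.logb 2 ((cnt a x0 : ℝ) / n))) := by
  classical
  rcases Nat.eq_zero_or_pos n with hn | hn
  · subst hn
    have h1 : (univ.filter (fun x : Fin 0 → 𝒳 => ∀ a, cnt a x = cnt a x0)).card = 1 := by
      rw [Finset.filter_true_of_mem (fun x _ a => by simp [cnt])]
      simp [Finset.card_univ]
    rw [h1]
    have h2 : ∀ a : 𝒳, ((cnt a x0 : ℝ) / (0:ℕ)) * Real.logb 2 ((cnt a x0 : ℝ) / (0:ℕ)) = 0 := by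
      intro a
      simp [cnt]
    simp [h2, Real.rpow_natCast]
  · have hn' : (0:ℝ) < n := by exact_mod_cast hn
    set p : 𝒳 → ℝ := fun a => (cnt a x0 : ℝ) / n with hpdef
    have hpa : ∀ a, (cnt a x0 : ℝ) / n = p a := fun a => rfl
    simp only [hpa]
    set N := (univ.filter (fun x : Fin n → 𝒳 => ∀ a, cnt a x = cnt a x0)).card with hNdef
    set E := (n:ℝ) * (-∑ a, p a * Real.logb 2 (p a)) with hEdef
    set P := ∏ a, p a ^ cnt a x0 with hPdef
    have hp_nonneg : ∀ a, 0 ≤ p a := fun a => div_nonneg (Nat.cast_nonneg _) hn'.le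
    have hfac_pos : ∀ a, 0 < p a ^ cnt a x0 := by
      intro a
      rcases Nat.eq_zero_or_pos (cnt a x0) with h | h
      · simp [h]
      · exact pow_pos (div_pos (by exact_mod_cast h) hn') _
    have hPpos : 0 < P := Finset.prod_pos fun a _ => hfac_pos a
    -- logb computation
    have hnp : ∀ a, (n:ℝ) * p a = (cnt a x0 : ℝ) := by
      intro a
      rw [hpdef]
      field_simp
    have hlogP : Real.logb 2 P = -E := by
      have key : ∀ a : 𝒳, Real.log (p a ^ cnt a x0) / Real.log 2
          = ↑n * (p a * Real.logb 2 (p a)) := by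
        intro a
        rw [Real.log_pow, Real.logb, ← hnp a]
        ring
      rw [hPdef, Real.logb, Real.log_prod (fun a _ => (hfac_pos a).ne'),
        Finset.sum_div, Finset.sum_congr rfl (fun a _ => key a), ← Finset.mul_sum, hEdef]
      ring
    have h2E : (2:ℝ) ^ E = P⁻¹ := by
      have h := Real.rpow_logb (b := 2) (by norm_num) (by norm_num) hPpos
      rw [hlogP] at h
      rw [← h, ← Real.rpow_neg (by norm_num), neg_neg]
    -- total probability one
    have hsum_p : ∑ a, p a = 1 := by
      rw [hpdef, ← Finset.sum_div]
      rw [show ∑ a, ((cnt a x0 : ℕ):ℝ) = ((∑ a, cnt a x0 : ℕ) : ℝ) by push_cast; rfl]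
      rw [sum_cnt x0]
      field_simp
    have hsum1 : ∑ x : Fin n → 𝒳, ∏ i, p (x i) = 1 := by
      have h := Finset.prod_univ_sum (fun _ : Fin n => (univ : Finset 𝒳)) (fun _ a => p a)
      rw [Fintype.piFinset_univ] at h
      rw [← h, Finset.prod_congr rfl (fun (i : Fin n) _ => hsum_p), Finset.prod_const, one_pow]
    -- each element of the type class has probability P
    have hTx : ∀ (x1 : Fin n → 𝒳) (x : Fin n → 𝒳),
        x ∈ univ.filter (fun x : Fin n → 𝒳 => ∀ a, cnt a x = cnt a x1) →
        ∏ i, p (x i) = ∏ a, p a ^ cnt a x1 := by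
      intro x1 x hx
      rw [prod_comp_cnt x p]
      exact Finset.prod_congr rfl fun a _ => by rw [(Finset.mem_filter.1 hx).2 a]
    -- upper bound
    have hupper : (N:ℝ) * P ≤ 1 := by
      rw [← hsum1]
      have hstep : ∑ x ∈ univ.filter (fun x : Fin n → 𝒳 => ∀ a, cnt a x = cnt a x0),
          ∏ i, p (x i) = (N:ℝ) * P := by
        rw [Finset.sum_congr rfl (fun x hx => hTx x0 x hx), Finset.sum_const, nsmul_eq_mul]
      rw [← hstep]
      exact Finset.sum_le_sum_of_subset_of_nonneg (Finset.filter_subset _ _)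
        (fun x _ _ => Finset.prod_nonneg fun i _ => hp_nonneg (x i))
    have hub : (N:ℝ) ≤ (2:ℝ) ^ E := by
      rw [h2E, ← one_div]
      exact (le_div_iff₀ hPpos).2 hupper
    -- lower bound
    have hQ : ∀ x1 : Fin n → 𝒳,
        ∏ a, p a ^ cnt a x1 = (∏ a, ((cnt a x0 : ℕ):ℝ) ^ cnt a x1) / (n:ℝ) ^ n := by
      intro x1
      have hnn : ((n:ℝ)) ^ n = ∏ a, ((n:ℝ)) ^ cnt a x1 := by
        rw [Finset.prod_pow_eq_pow_sum univ (fun a => cnt a x1) ((n:ℝ)), sum_cnt x1]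
      rw [eq_div_iff (by positivity), hnn, ← Finset.prod_mul_distrib]
      refine Finset.prod_congr rfl fun a _ => ?_
      simp only [hpdef]
      rw [div_pow, div_mul_cancel₀ _ (by positivity)]
    have hinner : ∀ x1 : Fin n → 𝒳,
        ((univ.filter (fun x : Fin n → 𝒳 => ∀ a, cnt a x = cnt a x1)).card : ℝ)
          * ∏ a, p a ^ cnt a x1 ≤ (N:ℝ) * P := by
      intro x1
      have hnat := key_nat x0 x1
      have hcast : ((univ.filter (fun x : Fin n → 𝒳 => ∀ a, cnt a x = cnt a x1)).card : ℝ)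
            * ∏ a, ((cnt a x0 : ℕ):ℝ) ^ cnt a x1
          ≤ (N:ℝ) * ∏ a, ((cnt a x0 : ℕ):ℝ) ^ cnt a x0 := by
        exact_mod_cast hnat
      rw [hQ x1, hPdef, hQ x0, ← mul_div_assoc, ← mul_div_assoc]
      gcongr
    -- number of types
    have himg_nat : (univ.image (fun x : Fin n → 𝒳 => fun a => cnt a x)).card
        ≤ (n + 1) ^ Fintype.card 𝒳 := by
      have hle : ∀ (jj : 𝒳 → ℕ), jj ∈ univ.image (fun x : Fin n → 𝒳 => fun a => cnt a x) →
          ∀ a, jj a ≤ n := by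
        intro jj hjj a
        obtain ⟨x, _, hx⟩ := Finset.mem_image.1 hjj
        rw [← hx]
        exact cnt_le a x
      open Fin.NatCast in
      have hinj : Set.InjOn (fun (j : 𝒳 → ℕ) (a : 𝒳) => ((j a : ℕ) : Fin (n+1)))
          ↑(univ.image (fun x : Fin n → 𝒳 => fun a => cnt a x)) := by
        intro j hj j' hj' he
        funext a
        have h1 := congrArg Fin.val (congrFun he a)
        rwa [Fin.val_cast_of_lt (Nat.lt_succ_of_le (hle j (Finset.mem_coe.1 hj) a)),
          Fin.val_cast_of_lt (Nat.lt_succ_of_le (hle j' (Finset.mem_coe.1 hj') a))] at h1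
      open Fin.NatCast in
      have h := Finset.card_le_card_of_injOn _ (fun j _ => Finset.mem_univ
        (fun a => ((j a : ℕ) : Fin (n+1)))) hinj
      calc (univ.image (fun x : Fin n → 𝒳 => fun a => cnt a x)).card
          ≤ (univ : Finset (𝒳 → Fin (n+1))).card := h
        _ = (n + 1) ^ Fintype.card 𝒳 := by
            simp [Finset.card_univ, Fintype.card_fun]
    have himg : ((univ.image (fun x : Fin n → 𝒳 => fun a => cnt a x)).card : ℝ)
        ≤ ((n:ℝ) + 1) ^ Fintype.card 𝒳 := by
      calc ((univ.image (fun x : Fin n → 𝒳 => fun a => cnt a x)).card : ℝ)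
          ≤ (((n + 1) ^ Fintype.card 𝒳 : ℕ) : ℝ) := by exact_mod_cast himg_nat
        _ = ((n:ℝ) + 1) ^ Fintype.card 𝒳 := by push_cast; ring
    -- grouping
    have hgroup := Finset.sum_fiberwise_of_maps_to
      (s := (univ : Finset (Fin n → 𝒳)))
      (g := fun x : Fin n → 𝒳 => fun a => cnt a x)
      (t := univ.image (fun x : Fin n → 𝒳 => fun a => cnt a x))
      (fun x _ => Finset.mem_image_of_mem _ (Finset.mem_univ x))
      (fun x => ∏ i, p (x i))
    have hNP_nonneg : (0:ℝ) ≤ (N:ℝ) * P :=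
      mul_nonneg (Nat.cast_nonneg _) hPpos.le
    have hlow1 : (1:ℝ) ≤ ((n:ℝ) + 1) ^ Fintype.card 𝒳 * ((N:ℝ) * P) := by
      calc (1:ℝ) = ∑ x : Fin n → 𝒳, ∏ i, p (x i) := hsum1.symm
        _ = ∑ j ∈ univ.image (fun x : Fin n → 𝒳 => fun a => cnt a x),
              ∑ x ∈ univ.filter (fun x : Fin n → 𝒳 => (fun a => cnt a x) = j),
                ∏ i, p (x i) := hgroup.symm
        _ ≤ ∑ _j ∈ univ.image (fun x : Fin n → 𝒳 => fun a => cnt a x), (N:ℝ) * P := by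
            refine Finset.sum_le_sum fun j hj => ?_
            obtain ⟨x1, _, hx1⟩ := Finset.mem_image.1 hj
            have hfil : univ.filter (fun x : Fin n → 𝒳 => (fun a => cnt a x) = j)
                = univ.filter (fun x : Fin n → 𝒳 => ∀ a, cnt a x = cnt a x1) := by
              refine Finset.filter_congr fun x _ => ?_
              rw [← hx1]
              simp [funext_iff]
            rw [hfil, Finset.sum_congr rfl (fun x hx => hTx x1 x hx), Finset.sum_const,
              nsmul_eq_mul]
            exact hinner x1
        _ = ((univ.image (fun x : Fin n → 𝒳 => fun a => cnt a x)).card : ℝ) * ((N:ℝ) * P) := by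
            rw [Finset.sum_const, nsmul_eq_mul]
        _ ≤ ((n:ℝ) + 1) ^ Fintype.card 𝒳 * ((N:ℝ) * P) :=
            mul_le_mul_of_nonneg_right himg hNP_nonneg
    refine ⟨?_, hub⟩
    rw [h2E, ← mul_inv]
    have h3 : (1:ℝ) ≤ (N:ℝ) * (((n:ℝ) + 1) ^ Fintype.card 𝒳 * P) := by
      calc (1:ℝ) ≤ ((n:ℝ) + 1) ^ Fintype.card 𝒳 * ((N:ℝ) * P) := hlow1
        _ = (N:ℝ) * (((n:ℝ) + 1) ^ Fintype.card 𝒳 * P) := by ring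
    rw [← one_div]
    have hMpos : (0:ℝ) < ((n:ℝ) + 1) ^ Fintype.card 𝒳 := by positivity
    exact (div_le_iff₀ (mul_pos hMpos hPpos)).2 (by linarith [h3])
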